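/- Let P and S be disjoint finite sets of points in the Euclidean plane with |P| ≥ 2, let k be a natural number, and suppose at least one Steiner tree of P with at most k Steiner points exists. Let r̂ be the infimum of all r > 0 for which there exists a tree T' with vertex set P such that every edge {p,q} of T' satisfies w_r(p,q) < ∞ and ∑_{{p,q} ∈ E(T')} ⌊w_r(p,q)/2⌋ ≤ k. Then: (i) every Steiner tree of P with at most k Steiner points has bottleneck at least r̂; and (ii) there exists a Steiner tree of P with at most k Steiner points whose bottleneck is at most 2·r̂. In particular, there exists a Steiner tree of P with at most k Steiner points whose bottleneck is at most twice the minimum bottleneck over all Steiner trees of P with at most k Steiner points. -/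

import Mathlib

open scoped ENNReal

noncomputable section

/-- Points of the Euclidean plane. -/
abbrev Pt : Type := EuclideanSpace ℝ (Fin 2)

noncomputable instance : DecidableEq Pt := Classical.decEq _

/-- The graph `G_r` on vertex set `P ∪ S`: two distinct points of `P ∪ S` are adjacent
iff their Euclidean distance is at most `r`.  (Points outside `P ∪ S` are isolated.) -/
def stGraph (P S : Finset Pt) (r : ℝ) : SimpleGraph Pt where
  Adj x y := x ≠ y ∧ x ∈ P ∪ S ∧ y ∈ P ∪ S ∧ dist x y ≤ r
  symm := by
    constructor
    rintro x y ⟨h1, h2, h3, h4⟩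
    exact ⟨h1.symm, h3, h2, by rwa [dist_comm]⟩
  loopless := by constructor; rintro x ⟨h, -⟩; exact h rfl

/-- `wgt P S r p q` : the minimum, over all paths from `p` to `q` in `G_r`, of the number of
vertices from `S` appearing on the path; `⊤` if there is no such path. -/
def wgt (P S : Finset Pt) (r : ℝ) (p q : Pt) : ℕ∞ :=
  sInf {n : ℕ∞ | ∃ wk : (stGraph P S r).Walk p q, wk.IsPath ∧
    n = ((wk.support.filter (fun x => decide (x ∈ S))).length : ℕ∞)}

/-- The weight as a function on unordered pairs (it is symmetric, so the symmetrization
`min (wgt p q) (wgt q p)` coincides with `wgt p q`). -/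
def ewgt (P S : Finset Pt) (r : ℝ) : Sym2 Pt → ℕ∞ :=
  Sym2.lift ⟨fun p q => min (wgt P S r p q) (wgt P S r q p), fun _ _ => min_comm _ _⟩

/-- The bottleneck of a geometric tree: the maximum Euclidean length of its edges. -/
def bottleneck {V : Finset Pt} (T : SimpleGraph ↥V) : ℝ :=
  sSup {d : ℝ | ∃ x y : ↥V, T.Adj x y ∧ d = dist (x : Pt) (y : Pt)}

/-- `goodR P S k r` : there is a tree `T'` on vertex set `P` all of whose edges `{p,q}`
satisfy `w_r(p,q) < ∞` and `∑ ⌊w_r(p,q)/2⌋ ≤ k`. -/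
def goodR (P S : Finset Pt) (k : ℕ) (r : ℝ) : Prop :=
  ∃ T' : SimpleGraph ↥P, T'.IsTree ∧
    (∀ e ∈ T'.edgeSet, ewgt P S r (e.map Subtype.val) ≠ ⊤) ∧
    ∑ e ∈ T'.edgeSet.toFinite.toFinset,
      (ewgt P S r (e.map Subtype.val)).toNat / 2 ≤ k


open SimpleGraph

/-- number of `S`-vertices on a walk, with multiplicity -/
def cQ (S : Finset Pt) {G : SimpleGraph Pt} {x y : Pt} (w : G.Walk x y) : ℕ :=
  (w.support.filter (fun z => decide (z ∈ S))).length

lemma cQ_nil {S : Finset Pt} {G : SimpleGraph Pt} {x : Pt} :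
    cQ S (Walk.nil : G.Walk x x) = if x ∈ S then 1 else 0 := by
  by_cases h : x ∈ S <;> simp [cQ, List.filter_cons, h]

lemma cQ_cons {S : Finset Pt} {G : SimpleGraph Pt} {x y z : Pt} (h : G.Adj x y)
    (w : G.Walk y z) : cQ S (Walk.cons h w) = (if x ∈ S then 1 else 0) + cQ S w := by
  by_cases hx : x ∈ S <;> simp [cQ, Walk.support_cons, List.filter_cons, hx] <;> omega

lemma cQ_append {S : Finset Pt} {G : SimpleGraph Pt} {x y z : Pt} (w₁ : G.Walk x y)
    (w₂ : G.Walk y z) : cQ S (w₁.append w₂) ≤ cQ S w₁ + cQ S w₂ := by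
  simp only [cQ, Walk.support_append, List.filter_append, List.length_append]
  have : (w₂.support.tail.filter (fun z => decide (z ∈ S))).length ≤
      (w₂.support.filter (fun z => decide (z ∈ S))).length := by
    apply List.Sublist.length_le
    exact List.Sublist.filter _ (List.tail_sublist _)
  omega

lemma cQ_reverse {S : Finset Pt} {G : SimpleGraph Pt} {x y : Pt} (w : G.Walk x y) :
    cQ S w.reverse = cQ S w := by
  simp [cQ, Walk.support_reverse, List.filter_reverse]

lemma wgt_le_walk {P S : Finset Pt} {r : ℝ} {p q : Pt} (w : (stGraph P S r).Walk p q) :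
    wgt P S r p q ≤ (cQ S w : ℕ∞) := by
  refine le_trans (sInf_le ⟨w.bypass, w.bypass_isPath, rfl⟩) ?_
  have hsub : (w.bypass.support.filter (fun z => decide (z ∈ S))) ⊆
      (w.support.filter (fun z => decide (z ∈ S))) := by
    intro z hz
    rw [List.mem_filter] at hz ⊢
    exact ⟨w.support_bypass_subset hz.1, hz.2⟩
  have hnd : (w.bypass.support.filter (fun z => decide (z ∈ S))).Nodup :=
    (w.bypass_isPath.support_nodup).filter _
  have hlen : (w.bypass.support.filter (fun z => decide (z ∈ S))).length ≤
      (w.support.filter (fun z => decide (z ∈ S))).length := by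
    calc _ = (w.bypass.support.filter (fun z => decide (z ∈ S))).toFinset.card :=
          (List.toFinset_card_of_nodup hnd).symm
    _ ≤ (w.support.filter (fun z => decide (z ∈ S))).toFinset.card := by
          apply Finset.card_le_card
          intro a ha
          rw [List.mem_toFinset] at ha ⊢
          exact hsub ha
    _ ≤ _ := List.toFinset_card_le _
  exact_mod_cast hlen

lemma wgt_symm (P S : Finset Pt) (r : ℝ) (p q : Pt) : wgt P S r p q = wgt P S r q p := by
  have key : ∀ a b : Pt, wgt P S r b a ≤ wgt P S r a b := by
    intro a b
    refine le_sInf ?_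
    rintro n ⟨wk, hp, rfl⟩
    refine le_trans (wgt_le_walk wk.reverse) ?_
    rw [cQ_reverse]
    rfl
  exact le_antisymm (key q p) (key p q)

lemma ewgt_mk (P S : Finset Pt) (r : ℝ) (p q : Pt) :
    ewgt P S r s(p, q) = wgt P S r p q := by
  simp [ewgt, wgt_symm P S r q p]

lemma wgt_attain {P S : Finset Pt} {r : ℝ} {p q : Pt} (h : wgt P S r p q ≠ ⊤) :
    ∃ w : (stGraph P S r).Walk p q, cQ S w = (wgt P S r p q).toNat := by
  classical
  set A := {n : ℕ∞ | ∃ wk : (stGraph P S r).Walk p q, wk.IsPath ∧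
    n = ((wk.support.filter (fun x => decide (x ∈ S))).length : ℕ∞)} with hA
  have hne : A.Nonempty := by
    by_contra hcon
    rw [Set.not_nonempty_iff_eq_empty] at hcon
    apply h
    simp [wgt, ← hA, hcon]
  have hmem : sInf A ∈ A := csInf_mem hne
  obtain ⟨wk, hp, hval⟩ := hmem
  exact ⟨wk, by rw [cQ, ← ENat.toNat_coe ((wk.support.filter (fun x => decide (x ∈ S))).length), ← hval]; rfl⟩



lemma nat_sum_union_le {α : Type*} [DecidableEq α] (s t : Finset α) (f : α → ℕ) :
    ∑ x ∈ s ∪ t, f x ≤ ∑ x ∈ s, f x + ∑ x ∈ t, f x := by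
  classical
  calc ∑ x ∈ s ∪ t, f x ≤ ∑ x ∈ s ∪ t, f x + ∑ x ∈ s ∩ t, f x := Nat.le_add_right _ _
  _ = ∑ x ∈ s, f x + ∑ x ∈ t, f x := Finset.sum_union_inter

lemma nat_sum_biUnion_le {α β : Type*} [DecidableEq β] (s : Finset α) (t : α → Finset β)
    (f : β → ℕ) : ∑ x ∈ s.biUnion t, f x ≤ ∑ a ∈ s, ∑ x ∈ t a, f x := by
  classical
  induction s using Finset.induction_on with
  | empty => simp
  | insert _ _ hx ih =>
    rename_i a s
    rw [Finset.biUnion_insert, Finset.sum_insert hx]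
    exact le_trans (nat_sum_union_le _ _ _) (by omega)

lemma nat_sum_image_le {α β : Type*} [DecidableEq β] (s : Finset α) (g : α → β) (f : β → ℕ) :
    ∑ x ∈ s.image g, f x ≤ ∑ a ∈ s, f (g a) := by
  classical
  induction s using Finset.induction_on with
  | empty => simp
  | insert _ _ hx ih =>
    rename_i a s
    rw [Finset.image_insert, Finset.sum_insert hx]
    refine le_trans ?_ (by omega : f (g a) + ∑ x ∈ s.image g, f x ≤ _)
    by_cases h : g a ∈ s.image g
    · rw [Finset.insert_eq_self.2 h]; omega
    · rw [Finset.sum_insert h]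

lemma reach_of_walk {V : Type*} {G G' : SimpleGraph V}
    (hrepl : ∀ x y, G.Adj x y → G'.Reachable x y) {a b : V} (p : G.Walk a b) :
    G'.Reachable a b := by
  induction p with
  | nil => exact Reachable.refl _
  | cons hadj p ihp => exact (hrepl _ _ hadj).trans ihp

lemma exists_spanning_tree {V : Type*} [Finite V] (G : SimpleGraph V) (h : G.Connected) :
    ∃ T : SimpleGraph V, T ≤ G ∧ T.IsTree := by
  classical
  obtain ⟨n, hn⟩ : ∃ n, G.edgeSet.ncard = n := ⟨_, rfl⟩
  induction n using Nat.strong_induction_on generalizing G with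
  | _ n ih =>
    by_cases hac : G.IsAcyclic
    · exact ⟨G, le_refl _, ⟨h, hac⟩⟩
    · rw [isAcyclic_iff_forall_adj_isBridge] at hac
      push_neg at hac
      obtain ⟨v, w, hadj, hnb⟩ := hac
      rw [isBridge_iff] at hnb
      push_neg at hnb
      have hreach := hnb
      set G' := G \ fromEdgeSet {s(v, w)} with hG'
      have hle : G' ≤ G := sdiff_le
      have hpre : G'.Connected := by
        haveI := h.nonempty
        constructor
        intro a b
        obtain ⟨p⟩ := h.preconnected a b
        refine reach_of_walk (fun x y hxy => ?_) p
        by_cases he : s(x, y) = s(v, w)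
        · rw [Sym2.eq_iff] at he
          rcases he with ⟨rfl, rfl⟩ | ⟨rfl, rfl⟩
          · exact hreach
          · exact hreach.symm
        · exact Adj.reachable (by
            simp only [hG', sdiff_adj, fromEdgeSet_adj]
            exact ⟨hxy, by simp [he]⟩)
      have hcard : G'.edgeSet.ncard < n := by
        rw [← hn]
        apply Set.ncard_lt_ncard
        · constructor
          · exact edgeSet_mono hle
          · intro hsub
            have : s(v, w) ∈ G'.edgeSet := hsub hadj
            simp [hG', edgeSet_sdiff, edgeSet_fromEdgeSet, hadj.ne] at this
        · exact G.edgeSet.toFinite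
      obtain ⟨T, hT1, hT2⟩ := ih _ hcard G' hpre rfl
      exact ⟨T, le_trans hT1 hle, hT2⟩

/-- Reachability within a vertex set `A`. -/
def Rwk (G : SimpleGraph Pt) (A : Finset Pt) (a b : Pt) : Prop :=
  ∃ w : G.Walk a b, ∀ z ∈ w.support, z ∈ A

lemma Rwk.mem₁ {G : SimpleGraph Pt} {A : Finset Pt} {a b : Pt} (h : Rwk G A a b) : a ∈ A :=
  h.choose_spec a h.choose.start_mem_support

lemma Rwk.mem₂ {G : SimpleGraph Pt} {A : Finset Pt} {a b : Pt} (h : Rwk G A a b) : b ∈ A :=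
  h.choose_spec b h.choose.end_mem_support

lemma Rwk_refl {G : SimpleGraph Pt} {A : Finset Pt} {a : Pt} (ha : a ∈ A) : Rwk G A a a :=
  ⟨Walk.nil, by simpa using ha⟩

lemma Rwk_symm {G : SimpleGraph Pt} {A : Finset Pt} {a b : Pt} (h : Rwk G A a b) :
    Rwk G A b a := by
  obtain ⟨w, hw⟩ := h
  exact ⟨w.reverse, by intro z hz; rw [Walk.support_reverse, List.mem_reverse] at hz; exact hw z hz⟩

lemma Rwk_trans {G : SimpleGraph Pt} {A : Finset Pt} {a b c : Pt} (h1 : Rwk G A a b)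
    (h2 : Rwk G A b c) : Rwk G A a c := by
  obtain ⟨w1, hw1⟩ := h1
  obtain ⟨w2, hw2⟩ := h2
  refine ⟨w1.append w2, ?_⟩
  intro z hz
  rw [Walk.support_append, List.mem_append] at hz
  rcases hz with hz | hz
  · exact hw1 z hz
  · exact hw2 z (List.mem_of_mem_tail hz)

lemma Rwk_support {G : SimpleGraph Pt} {A : Finset Pt} {a b : Pt} (w : G.Walk a b)
    (hw : ∀ z ∈ w.support, z ∈ A) : ∀ z ∈ w.support, Rwk G A a z := by
  intro z hz
  exact ⟨w.takeUntil z hz, fun u hu => hw u (Walk.support_takeUntil_subset w hz hu)⟩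

lemma lastExit_aux {G : SimpleGraph Pt} {U : Finset Pt} {ρ : Pt} :
    ∀ {y x : Pt} (w : G.Walk y x), x ≠ ρ → (∀ z ∈ w.support, z ∈ U) →
      (y ≠ ρ ∧ Rwk G (U.erase ρ) y x) ∨ (∃ v, G.Adj ρ v ∧ Rwk G (U.erase ρ) v x) := by
  intro y x w
  induction w with
  | nil =>
    intro hxρ hsup
    left
    exact ⟨hxρ, Rwk_refl (Finset.mem_erase.2 ⟨hxρ, hsup _ (by simp)⟩)⟩
  | cons h w'' ihw =>
    rename_i y' m x'
    intro hxρ hsup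
    rcases ihw hxρ (fun u hu => hsup u (by simp [hu])) with ⟨hmρ, hR⟩ | hgood
    · by_cases hy : y' = ρ
      · subst hy
        exact Or.inr ⟨m, h, hR⟩
      · left
        refine ⟨hy, Rwk_trans ⟨Walk.cons h Walk.nil, ?_⟩ hR⟩
        intro u hu
        simp only [Walk.support_cons, Walk.support_nil, List.mem_cons, List.mem_singleton] at hu
        rcases hu with rfl | rfl | hfalse
        · exact Finset.mem_erase.2 ⟨hy, hsup u (by simp)⟩
        · exact hR.mem₁
        · exact absurd hfalse (by simp)
    · exact Or.inr hgood

lemma lastExit {G : SimpleGraph Pt} {U : Finset Pt} {ρ x : Pt} (hx : x ∈ U.erase ρ)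
    (w : G.Walk ρ x) (hw : ∀ z ∈ w.support, z ∈ U) :
    ∃ v, G.Adj ρ v ∧ Rwk G (U.erase ρ) v x := by
  rcases lastExit_aux w (Finset.ne_of_mem_erase hx) hw with ⟨hne, _⟩ | hgood
  · exact absurd rfl hne
  · exact hgood

open Classical in
/-- connected component of `x` within vertex set `A` -/
noncomputable def componentOf (G : SimpleGraph Pt) (A : Finset Pt) (x : Pt) : Finset Pt :=
  A.filter (Rwk G A x)

lemma mem_componentOf {G : SimpleGraph Pt} {A : Finset Pt} {x y : Pt} :
    y ∈ componentOf G A x ↔ y ∈ A ∧ Rwk G A x y := by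
  simp [componentOf]

lemma componentOf_eq {G : SimpleGraph Pt} {A : Finset Pt} {x y : Pt} (h : Rwk G A x y) :
    componentOf G A x = componentOf G A y := by
  ext z
  simp only [mem_componentOf]
  exact ⟨fun ⟨hz, hR⟩ => ⟨hz, Rwk_trans (Rwk_symm h) hR⟩, fun ⟨hz, hR⟩ => ⟨hz, Rwk_trans h hR⟩⟩

lemma componentOf_disjoint {G : SimpleGraph Pt} {A : Finset Pt} {x y : Pt}
    (h : componentOf G A x ≠ componentOf G A y) :
    Disjoint (componentOf G A x) (componentOf G A y) := by
  rw [Finset.disjoint_left]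
  intro z hz hz'
  rw [mem_componentOf] at hz hz'
  exact h ((componentOf_eq hz.2).trans (componentOf_eq hz'.2).symm)

lemma cQ_append_cons {S : Finset Pt} {G : SimpleGraph Pt} {x y m z : Pt} (w₁ : G.Walk x y)
    (h : G.Adj y m) (w₂ : G.Walk m z) :
    cQ S (w₁.append (Walk.cons h w₂)) = cQ S w₁ + cQ S w₂ := by
  simp [cQ, Walk.support_append, Walk.support_cons, List.filter_append]

lemma core (P S : Finset Pt) (hPS : Disjoint P S) (r : ℝ) :
    ∀ (N : ℕ) (P₀ Q₀ : Finset Pt), (P₀ ∪ Q₀).card ≤ N → P₀ ⊆ P → Q₀ ⊆ S →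
    (∀ x ∈ P₀ ∪ Q₀, ∀ y ∈ P₀ ∪ Q₀,
      ∃ w : (stGraph P S r).Walk x y, ∀ z ∈ w.support, z ∈ P₀ ∪ Q₀) →
    ∀ ρ ∈ P₀ ∪ Q₀, P₀.Nonempty →
    ∃ (E : Finset (Pt × Pt × ℕ)) (p₀ : Pt) (d : ℕ),
      p₀ ∈ P₀ ∧
      (∀ t ∈ E, t.1 ∈ P₀ ∧ t.2.1 ∈ P₀ ∧ t.1 ≠ t.2.1 ∧
        ∃ w : (stGraph P S r).Walk t.1 t.2.1, cQ S w ≤ t.2.2) ∧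
      (∃ w : (stGraph P S r).Walk ρ p₀, cQ S w ≤ d) ∧
      ((∑ t ∈ E, t.2.2 / 2) + d ≤ Q₀.card) ∧
      (∀ p ∈ P₀, Relation.ReflTransGen
        (fun a b => ∃ c, (a, b, c) ∈ E ∨ (b, a, c) ∈ E) p₀ p) := by
  classical
  set G := stGraph P S r with hG
  intro N
  induction N with
  | zero =>
    intro P₀ Q₀ hcard _ _ _ ρ hρ _
    rw [Nat.le_zero, Finset.card_eq_zero] at hcard
    rw [hcard] at hρ
    exact absurd hρ (Finset.notMem_empty ρ)
  | succ N ih =>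
    intro P₀ Q₀ hcard hP₀ hQ₀ hconn ρ hρ hPne
    set U : Finset Pt := P₀ ∪ Q₀ with hU
    set U' : Finset Pt := U.erase ρ with hU'
    set comps : Finset (Finset Pt) := (P₀.erase ρ).image (componentOf G U') with hcomps
    have hcsub : ∀ c ∈ comps, c ⊆ U' := by
      intro c hc
      obtain ⟨p, _, rfl⟩ := Finset.mem_image.1 hc
      exact Finset.filter_subset _ _
    -- the main data for each component
    have hcompdata : ∀ c ∈ comps, ∃ (v p₀c : Pt) (dc : ℕ) (Ec : Finset (Pt × Pt × ℕ)),
        G.Adj ρ v ∧ v ∈ c ∧ p₀c ∈ c ∧ p₀c ∈ P₀ ∧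
        (∀ t ∈ Ec, t.1 ∈ P₀ ∧ t.2.1 ∈ P₀ ∧ t.1 ≠ t.2.1 ∧
          ∃ w : G.Walk t.1 t.2.1, cQ S w ≤ t.2.2) ∧
        (∃ w : G.Walk v p₀c, cQ S w ≤ dc) ∧
        ((∑ t ∈ Ec, t.2.2 / 2) + dc ≤ (c.filter (· ∈ Q₀)).card) ∧
        (∀ p ∈ c, p ∈ P₀ → Relation.ReflTransGen
          (fun a b => ∃ cc, (a, b, cc) ∈ Ec ∨ (b, a, cc) ∈ Ec) p₀c p) := by
      intro c hc
      obtain ⟨p, hpmem, rfl⟩ := Finset.mem_image.1 hc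
      have hpP₀ : p ∈ P₀ := Finset.mem_of_mem_erase hpmem
      have hpU' : p ∈ U' := Finset.mem_erase.2 ⟨Finset.ne_of_mem_erase hpmem,
        Finset.mem_union_left _ hpP₀⟩
      have hpc : p ∈ componentOf G U' p := mem_componentOf.2 ⟨hpU', Rwk_refl hpU'⟩
      obtain ⟨w0, hw0⟩ := hconn ρ hρ p (Finset.mem_union_left _ hpP₀)
      obtain ⟨v, hvadj, hvR⟩ := lastExit hpU' w0 hw0
      have hvc : v ∈ componentOf G U' p := mem_componentOf.2 ⟨hvR.mem₁, Rwk_symm hvR⟩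
      -- apply the induction hypothesis to this component
      set c := componentOf G U' p with hcdef
      have hc_eq : c.filter (· ∈ P₀) ∪ c.filter (· ∈ Q₀) = c := by
        ext z
        simp only [Finset.mem_union, Finset.mem_filter]
        constructor
        · rintro (⟨hz, _⟩ | ⟨hz, _⟩) <;> exact hz
        · intro hz
          have hzU : z ∈ U := Finset.mem_of_mem_erase ((hcsub _ hc) hz)
          rcases Finset.mem_union.1 hzU with hzP | hzQ
          · exact Or.inl ⟨hz, hzP⟩
          · exact Or.inr ⟨hz, hzQ⟩
      have hcardc : (c.filter (· ∈ P₀) ∪ c.filter (· ∈ Q₀)).card ≤ N := by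
        rw [hc_eq]
        have h1 : c.card ≤ U'.card := Finset.card_le_card (hcsub _ hc)
        have h2 : U'.card = U.card - 1 := Finset.card_erase_of_mem hρ
        have h3 : 1 ≤ U.card := Finset.card_pos.2 ⟨ρ, hρ⟩
        omega
      have hRpx : ∀ x ∈ c, Rwk G U' p x := fun x hx => (mem_componentOf.1 hx).2
      have hconnc : ∀ x ∈ c.filter (· ∈ P₀) ∪ c.filter (· ∈ Q₀),
          ∀ y ∈ c.filter (· ∈ P₀) ∪ c.filter (· ∈ Q₀),
          ∃ w : G.Walk x y, ∀ z ∈ w.support,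
            z ∈ c.filter (· ∈ P₀) ∪ c.filter (· ∈ Q₀) := by
        rw [hc_eq]
        intro x hx y hy
        obtain ⟨w, hw⟩ := Rwk_trans (Rwk_symm (hRpx x hx)) (hRpx y hy)
        refine ⟨w, fun z hz => ?_⟩
        have : Rwk G U' x z := Rwk_support w hw z hz
        have hpz : Rwk G U' p z := Rwk_trans (hRpx x hx) this
        exact mem_componentOf.2 ⟨hpz.mem₂, hpz⟩
      obtain ⟨Ec, p₀c, dc, hp₀cmem, hvalid, hwalk, hsum, hconn2⟩ :=
        ih (c.filter (· ∈ P₀)) (c.filter (· ∈ Q₀)) hcardc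
          (fun z hz => hP₀ (Finset.mem_filter.1 hz).2)
          (fun z hz => hQ₀ (Finset.mem_filter.1 hz).2) hconnc v
          (by rw [hc_eq]; exact hvc) ⟨p, Finset.mem_filter.2 ⟨hpc, hpP₀⟩⟩
      refine ⟨v, p₀c, dc, Ec, hvadj, hvc, (Finset.mem_filter.1 hp₀cmem).1,
        (Finset.mem_filter.1 hp₀cmem).2, ?_, hwalk, hsum, ?_⟩
      · intro t ht
        obtain ⟨h1, h2, h3, h4⟩ := hvalid t ht
        exact ⟨(Finset.mem_filter.1 h1).2, (Finset.mem_filter.1 h2).2, h3, h4⟩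
      · intro q hq hqP₀
        exact hconn2 q (Finset.mem_filter.2 ⟨hq, hqP₀⟩)
    choose vf pf df Ef hdata using hcompdata
    have hQsum : (∑ c ∈ comps, (c.filter (· ∈ Q₀)).card) ≤ (Q₀.erase ρ).card := by
      have hdisj : ∀ c₁ ∈ comps, ∀ c₂ ∈ comps, c₁ ≠ c₂ →
          Disjoint (c₁.filter (· ∈ Q₀)) (c₂.filter (· ∈ Q₀)) := by
        intro c₁ hc₁ c₂ hc₂ hne
        obtain ⟨p₁, _, rfl⟩ := Finset.mem_image.1 hc₁
        obtain ⟨p₂, _, rfl⟩ := Finset.mem_image.1 hc₂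
        exact Finset.disjoint_filter_filter (componentOf_disjoint hne)
      rw [← Finset.card_biUnion hdisj]
      apply Finset.card_le_card
      intro z hz
      obtain ⟨c, hc, hzc⟩ := Finset.mem_biUnion.1 hz
      rw [Finset.mem_filter] at hzc
      exact Finset.mem_erase.2 ⟨Finset.ne_of_mem_erase ((hcsub _ hc) hzc.1), hzc.2⟩
    rcases Finset.mem_union.1 hρ with hρP | hρQ
    · -- terminal root
      have hρS : ρ ∉ S := Finset.disjoint_left.1 hPS (hP₀ hρP)
      refine ⟨(comps.attach.biUnion fun c => Ef c.1 c.2) ∪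
        comps.attach.image (fun c => (ρ, pf c.1 c.2, df c.1 c.2)), ρ, 0, hρP, ?_, ?_, ?_, ?_⟩
      · intro t ht
        rcases Finset.mem_union.1 ht with ht | ht
        · obtain ⟨c, _, htc⟩ := Finset.mem_biUnion.1 ht
          exact (hdata c.1 c.2).2.2.2.2.1 t htc
        · obtain ⟨c, _, rfl⟩ := Finset.mem_image.1 ht
          obtain ⟨hadj, hvc, hpc, hpP, _, ⟨w, hw⟩, _, _⟩ := hdata c.1 c.2
          refine ⟨hρP, hpP, ?_, Walk.cons hadj w, ?_⟩
          · exact fun heq => Finset.ne_of_mem_erase ((hcsub _ c.2) hpc) heq.symm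
          · rw [cQ_cons]
            simp [hρS]
            exact hw
      · exact ⟨Walk.nil, by rw [cQ_nil]; simp [hρS]⟩
      · have h1 := nat_sum_union_le (comps.attach.biUnion fun c => Ef c.1 c.2)
          (comps.attach.image (fun c => (ρ, pf c.1 c.2, df c.1 c.2))) (fun t => t.2.2 / 2)
        have h2 := nat_sum_biUnion_le comps.attach (fun c => Ef c.1 c.2) (fun t => t.2.2 / 2)
        have h3 := nat_sum_image_le comps.attach (fun c => (ρ, pf c.1 c.2, df c.1 c.2))
          (fun t => t.2.2 / 2)
        have h4 : (∑ c ∈ comps.attach, ∑ t ∈ Ef c.1 c.2, t.2.2 / 2) +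
            (∑ c ∈ comps.attach, df c.1 c.2 / 2) ≤
            ∑ c ∈ comps.attach, (c.1.filter (· ∈ Q₀)).card := by
          rw [← Finset.sum_add_distrib]
          apply Finset.sum_le_sum
          intro c _
          have := (hdata c.1 c.2).2.2.2.2.2.2.1
          omega
        have h5 : (∑ c ∈ comps.attach, (c.1.filter (· ∈ Q₀)).card) =
            ∑ c ∈ comps, (c.filter (· ∈ Q₀)).card :=
          Finset.sum_attach comps (fun c => (c.filter (· ∈ Q₀)).card)
        have h6 : (Q₀.erase ρ).card ≤ Q₀.card := Finset.card_erase_le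
        simp only at h1 h3
        omega
      · intro p hpP
        by_cases hpρ : p = ρ
        · subst hpρ; exact Relation.ReflTransGen.refl
        · have hpU' : p ∈ U' := Finset.mem_erase.2 ⟨hpρ, Finset.mem_union_left _ hpP⟩
          have hc : componentOf G U' p ∈ comps :=
            Finset.mem_image.2 ⟨p, Finset.mem_erase.2 ⟨hpρ, hpP⟩, rfl⟩
          have hpc : p ∈ componentOf G U' p := mem_componentOf.2 ⟨hpU', Rwk_refl hpU'⟩
          obtain ⟨hadj, hvc, hpfc, hpfP, _, _, _, hconn2⟩ := hdata _ hc
          have step1 : Relation.ReflTransGen (fun a b => ∃ cc,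
              (a, b, cc) ∈ (comps.attach.biUnion fun c => Ef c.1 c.2) ∪
                comps.attach.image (fun c => (ρ, pf c.1 c.2, df c.1 c.2)) ∨
              (b, a, cc) ∈ (comps.attach.biUnion fun c => Ef c.1 c.2) ∪
                comps.attach.image (fun c => (ρ, pf c.1 c.2, df c.1 c.2))) ρ (pf _ hc) :=
            Relation.ReflTransGen.single ⟨df _ hc, Or.inl (Finset.mem_union_right _
              (Finset.mem_image.2 ⟨⟨_, hc⟩, Finset.mem_attach _ _, rfl⟩))⟩
          refine step1.trans (Relation.ReflTransGen.mono ?_ _ _ (hconn2 p hpc hpP))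
          rintro a b ⟨cc, hcc | hcc⟩
          · exact ⟨cc, Or.inl (Finset.mem_union_left _
              (Finset.mem_biUnion.2 ⟨⟨_, hc⟩, Finset.mem_attach _ _, hcc⟩))⟩
          · exact ⟨cc, Or.inr (Finset.mem_union_left _
              (Finset.mem_biUnion.2 ⟨⟨_, hc⟩, Finset.mem_attach _ _, hcc⟩))⟩
    · -- Steiner root
      have hρS : ρ ∈ S := hQ₀ hρQ
      have hρnP : ρ ∉ P₀ := fun hcon => Finset.disjoint_left.1 hPS (hP₀ hcon) hρS
      obtain ⟨p1, hp1⟩ := hPne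
      have hp1U' : p1 ∈ U' := Finset.mem_erase.2 ⟨fun h => hρnP (h ▸ hp1),
        Finset.mem_union_left _ hp1⟩
      have hcompsne : comps.Nonempty := ⟨componentOf G U' p1,
        Finset.mem_image.2 ⟨p1, Finset.mem_erase.2 ⟨Finset.ne_of_mem_erase hp1U', hp1⟩, rfl⟩⟩
      obtain ⟨cs, hcsmem, hmin⟩ := Finset.exists_min_image comps.attach (fun c => df c.1 c.2)
        (Finset.attach_nonempty_iff.2 hcompsne)
      set E : Finset (Pt × Pt × ℕ) := (comps.attach.biUnion fun c => Ef c.1 c.2) ∪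
        (comps.attach.erase cs).image
          (fun c => (pf c.1 c.2, pf cs.1 cs.2, df c.1 c.2 + df cs.1 cs.2 + 1)) with hE
      have hconnector : ∀ c ∈ comps.attach.erase cs,
          pf c.1 c.2 ≠ pf cs.1 cs.2 := by
        intro c hcmem heq
        have hne : c.1 ≠ cs.1 := by
          intro h
          exact Finset.ne_of_mem_erase hcmem (Subtype.ext h)
        obtain ⟨pa, _, ha⟩ := Finset.mem_image.1 c.2
        obtain ⟨pb, _, hb⟩ := Finset.mem_image.1 cs.2
        have hdis : Disjoint c.1 cs.1 := by
          rw [← ha, ← hb]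
          exact componentOf_disjoint (by rw [ha, hb]; exact hne)
        exact Finset.disjoint_left.1 hdis ((hdata c.1 c.2).2.2.1)
          (heq ▸ (hdata cs.1 cs.2).2.2.1)
      refine ⟨E, pf cs.1 cs.2, df cs.1 cs.2 + 1, (hdata cs.1 cs.2).2.2.2.1, ?_, ?_, ?_, ?_⟩
      · intro t ht
        rcases Finset.mem_union.1 ht with ht | ht
        · obtain ⟨c, _, htc⟩ := Finset.mem_biUnion.1 ht
          exact (hdata c.1 c.2).2.2.2.2.1 t htc
        · obtain ⟨c, hcmem, rfl⟩ := Finset.mem_image.1 ht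
          obtain ⟨hadjc, _, _, hpPc, _, ⟨wc, hwc⟩, _, _⟩ := hdata c.1 c.2
          obtain ⟨hadjs, _, _, hpPs, _, ⟨ws, hws⟩, _, _⟩ := hdata cs.1 cs.2
          refine ⟨hpPc, hpPs, hconnector c hcmem,
            wc.reverse.append (Walk.cons hadjc.symm (Walk.cons hadjs ws)), ?_⟩
          rw [cQ_append_cons, cQ_reverse, cQ_cons]
          simp only [hρS, if_true]
          omega
      · obtain ⟨hadjs, _, _, _, _, ⟨ws, hws⟩, _, _⟩ := hdata cs.1 cs.2
        refine ⟨Walk.cons hadjs ws, ?_⟩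
        rw [cQ_cons]
        simp only [hρS, if_true]
        omega
      · have h1 := nat_sum_union_le (comps.attach.biUnion fun c => Ef c.1 c.2)
          ((comps.attach.erase cs).image
            (fun c => (pf c.1 c.2, pf cs.1 cs.2, df c.1 c.2 + df cs.1 cs.2 + 1)))
          (fun t => t.2.2 / 2)
        have h2 := nat_sum_biUnion_le comps.attach (fun c => Ef c.1 c.2) (fun t => t.2.2 / 2)
        have h3 := nat_sum_image_le (comps.attach.erase cs)
          (fun c => (pf c.1 c.2, pf cs.1 cs.2, df c.1 c.2 + df cs.1 cs.2 + 1))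
          (fun t => t.2.2 / 2)
        have h4 : (∑ c ∈ comps.attach.erase cs, (df c.1 c.2 + df cs.1 cs.2 + 1) / 2) ≤
            ∑ c ∈ comps.attach.erase cs, df c.1 c.2 := by
          apply Finset.sum_le_sum
          intro c hcmem
          have := hmin c (Finset.mem_of_mem_erase hcmem)
          omega
        have h5 : (∑ c ∈ comps.attach.erase cs, df c.1 c.2) + df cs.1 cs.2 =
            ∑ c ∈ comps.attach, df c.1 c.2 := Finset.sum_erase_add _ _ hcsmem
        have h6 : (∑ c ∈ comps.attach, ∑ t ∈ Ef c.1 c.2, t.2.2 / 2) +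
            (∑ c ∈ comps.attach, df c.1 c.2) ≤
            ∑ c ∈ comps.attach, (c.1.filter (· ∈ Q₀)).card := by
          rw [← Finset.sum_add_distrib]
          apply Finset.sum_le_sum
          intro c _
          exact (hdata c.1 c.2).2.2.2.2.2.2.1
        have h7 : (∑ c ∈ comps.attach, (c.1.filter (· ∈ Q₀)).card) =
            ∑ c ∈ comps, (c.filter (· ∈ Q₀)).card :=
          Finset.sum_attach comps (fun c => (c.filter (· ∈ Q₀)).card)
        have h8 : (Q₀.erase ρ).card = Q₀.card - 1 := Finset.card_erase_of_mem hρQ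
        have h9 : 1 ≤ Q₀.card := Finset.card_pos.2 ⟨ρ, hρQ⟩
        simp only [hE] at *
        omega
      · intro p hpP
        have hpρ : p ≠ ρ := fun h => hρnP (h ▸ hpP)
        have hpU' : p ∈ U' := Finset.mem_erase.2 ⟨hpρ, Finset.mem_union_left _ hpP⟩
        have hc : componentOf G U' p ∈ comps :=
          Finset.mem_image.2 ⟨p, Finset.mem_erase.2 ⟨hpρ, hpP⟩, rfl⟩
        have hpc : p ∈ componentOf G U' p := mem_componentOf.2 ⟨hpU', Rwk_refl hpU'⟩
        have hmono : ∀ (c : Finset Pt) (hcm : c ∈ comps) (a b : Pt),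
            (∃ cc, (a, b, cc) ∈ Ef c hcm ∨ (b, a, cc) ∈ Ef c hcm) →
            (∃ cc, (a, b, cc) ∈ E ∨ (b, a, cc) ∈ E) := by
          rintro c hcm a b ⟨cc, hcc | hcc⟩
          · exact ⟨cc, Or.inl (Finset.mem_union_left _
              (Finset.mem_biUnion.2 ⟨⟨c, hcm⟩, Finset.mem_attach _ _, hcc⟩))⟩
          · exact ⟨cc, Or.inr (Finset.mem_union_left _
              (Finset.mem_biUnion.2 ⟨⟨c, hcm⟩, Finset.mem_attach _ _, hcc⟩))⟩
        by_cases hceq : (⟨componentOf G U' p, hc⟩ : {x // x ∈ comps}) = cs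
        · have hconn2 := (hdata _ hc).2.2.2.2.2.2.2 p hpc hpP
          have : pf cs.1 cs.2 = pf _ hc := by rw [← hceq]
          rw [this]
          exact Relation.ReflTransGen.mono (hmono _ hc) _ _ hconn2
        · have hconn2 := (hdata _ hc).2.2.2.2.2.2.2 p hpc hpP
          refine Relation.ReflTransGen.trans (Relation.ReflTransGen.single ?_)
            (Relation.ReflTransGen.mono (hmono _ hc) _ _ hconn2)
          refine ⟨df _ hc + df cs.1 cs.2 + 1, Or.inr (Finset.mem_union_right _
            (Finset.mem_image.2 ⟨⟨_, hc⟩, Finset.mem_erase.2 ⟨hceq, Finset.mem_attach _ _⟩,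
              rfl⟩))⟩

lemma edgeDists_finite {V : Finset Pt} (T : SimpleGraph ↥V) :
    {d : ℝ | ∃ x y : ↥V, T.Adj x y ∧ d = dist (x : Pt) (y : Pt)}.Finite := by
  apply Set.Finite.subset (Set.finite_range (fun q : ↥V × ↥V => dist (q.1 : Pt) (q.2 : Pt)))
  rintro d ⟨x, y, _, rfl⟩
  exact ⟨(x, y), rfl⟩

lemma tree_edge_le_bottleneck {V : Finset Pt} (T : SimpleGraph ↥V) {a b : ↥V}
    (h : T.Adj a b) : dist (a : Pt) (b : Pt) ≤ bottleneck T :=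
  le_csSup (edgeDists_finite T).bddAbove ⟨a, b, h, rfl⟩

lemma bottleneck_pos {V : Finset Pt} (hV : 2 ≤ V.card) {T : SimpleGraph ↥V}
    (hT : T.IsTree) : 0 < bottleneck T := by
  obtain ⟨a, ha, b, hb, hab⟩ := Finset.one_lt_card.1 hV
  have hreach := hT.isConnected.preconnected ⟨a, ha⟩ ⟨b, hb⟩
  refine hreach.elim fun w => ?_
  cases w with
  | nil => exact absurd rfl hab
  | cons hadj w' =>
    refine lt_of_lt_of_le ?_ (tree_edge_le_bottleneck T hadj)
    rw [dist_pos]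
    exact fun hc => hadj.ne (Subtype.ext hc)

lemma enat_toNat_le {x : ℕ∞} {n : ℕ} (h : x ≤ (n : ℕ∞)) : x.toNat ≤ n := by
  cases x with
  | top => simp at h
  | coe m => simpa using h

lemma goodR_of_tree (P S : Finset Pt) (hPS : Disjoint P S) (hP : 2 ≤ P.card) (k : ℕ)
    (S' : Finset Pt) (hS' : S' ⊆ S) (hk : S'.card ≤ k)
    (T : SimpleGraph ↥(P ∪ S')) (hT : T.IsTree) : goodR P S k (bottleneck T) := by
  classical
  set b := bottleneck T with hb
  -- hom from T to stGraph
  have hmap : ∀ {x y : ↥(P ∪ S')}, T.Adj x y → (stGraph P S b).Adj ↑x ↑y := by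
    intro x y h
    refine ⟨fun hc => h.ne (Subtype.ext hc), ?_, ?_, tree_edge_le_bottleneck T h⟩
    · exact Finset.union_subset_union_right hS' x.2
    · exact Finset.union_subset_union_right hS' y.2
  let f : T →g stGraph P S b := ⟨Subtype.val, hmap⟩
  have hconn : ∀ x ∈ P ∪ S', ∀ y ∈ P ∪ S',
      ∃ w : (stGraph P S b).Walk x y, ∀ z ∈ w.support, z ∈ P ∪ S' := by
    intro x hx y hy
    have hreach := hT.isConnected.preconnected ⟨x, hx⟩ ⟨y, hy⟩
    refine hreach.elim fun w => ?_
    refine ⟨w.map f, ?_⟩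
    intro z hz
    rw [Walk.support_map, List.mem_map] at hz
    obtain ⟨u, _, rfl⟩ := hz
    exact u.2
  obtain ⟨p1, hp1⟩ : P.Nonempty := Finset.card_pos.1 (by omega)
  obtain ⟨E, p₀, d, hp₀P, hvalid, _, hsum, hconnE⟩ :=
    core P S hPS b (P ∪ S').card P S' le_rfl (le_refl P) hS' hconn p1
      (Finset.mem_union_left _ hp1) ⟨p1, hp1⟩
  -- the connected graph on P
  set Gr : SimpleGraph ↥P :=
    { Adj := fun a b => a ≠ b ∧ ∃ c, ((a : Pt), (b : Pt), c) ∈ E ∨ ((b : Pt), (a : Pt), c) ∈ E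
      symm := by
        constructor
        rintro a b ⟨hne, c, hc⟩
        exact ⟨hne.symm, c, hc.symm⟩
      loopless := by constructor; rintro a ⟨hne, -⟩; exact hne rfl } with hGr
  have hkey : ∀ (y : Pt), Relation.ReflTransGen
      (fun a b => ∃ c, (a, b, c) ∈ E ∨ (b, a, c) ∈ E) p₀ y →
      ∀ hy : y ∈ P, Gr.Reachable ⟨p₀, hp₀P⟩ ⟨y, hy⟩ := by
    intro y h
    induction h with
    | refl => intro hy; exact Reachable.refl _
    | tail h1 h2 ih =>
      rename_i x' y'
      intro hy
      obtain ⟨c, hc⟩ := h2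
      have hx'P : x' ∈ P := by
        rcases hc with hc | hc
        · exact (hvalid _ hc).1
        · exact (hvalid _ hc).2.1
      have hne : x' ≠ y' := by
        rcases hc with hc | hc
        · exact (hvalid _ hc).2.2.1
        · exact (hvalid _ hc).2.2.1.symm
      refine (ih hx'P).trans (Adj.reachable ?_)
      exact ⟨fun hcon => hne (congrArg Subtype.val hcon), c, hc⟩
  have hGrconn : Gr.Connected := by
    have : Nonempty ↥P := ⟨⟨p1, hp1⟩⟩
    constructor
    intro a b
    have h1 := hkey ↑a (hconnE ↑a a.2) a.2
    have h2 := hkey ↑b (hconnE ↑b b.2) b.2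
    have ha : (⟨↑a, a.2⟩ : ↥P) = a := Subtype.ext rfl
    have hb' : (⟨↑b, b.2⟩ : ↥P) = b := Subtype.ext rfl
    rw [ha] at h1
    rw [hb'] at h2
    exact h1.symm.trans h2
  obtain ⟨T', hT'le, hT'tree⟩ := exists_spanning_tree Gr hGrconn
  -- edge conditions
  have hedge : ∀ e ∈ T'.edgeSet, ∃ t ∈ E, s(t.1, t.2.1) = e.map Subtype.val ∧
      ewgt P S b (e.map Subtype.val) ≤ (t.2.2 : ℕ∞) := by
    intro e he
    induction e using Sym2.ind with
    | _ a c =>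
      have hadj : Gr.Adj a c := hT'le he
      obtain ⟨hne, cc, hcc | hcc⟩ := hadj
      · obtain ⟨_, _, _, w, hw⟩ := hvalid _ hcc
        refine ⟨_, hcc, by simp [Sym2.map_pair_eq], ?_⟩
        rw [Sym2.map_pair_eq, ewgt_mk]
        exact le_trans (wgt_le_walk w) (by exact_mod_cast hw)
      · obtain ⟨_, _, _, w, hw⟩ := hvalid _ hcc
        refine ⟨_, hcc, by simp [Sym2.map_pair_eq, Sym2.eq_swap], ?_⟩
        rw [Sym2.map_pair_eq, ewgt_mk, wgt_symm]
        exact le_trans (wgt_le_walk w) (by exact_mod_cast hw)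
  refine ⟨T', hT'tree, ?_, ?_⟩
  · intro e he
    obtain ⟨t, _, _, hle⟩ := hedge e he
    exact fun hcon => by simp [hcon] at hle
  · set ES := T'.edgeSet.toFinite.toFinset with hES
    have hESsub : ∀ e ∈ ES, e ∈ T'.edgeSet := fun e he => (Set.Finite.mem_toFinset _).1 he
    have hch : ∀ e : {x // x ∈ ES}, ∃ t ∈ E, s(t.1, t.2.1) = e.1.map Subtype.val ∧
        (ewgt P S b (e.1.map Subtype.val)).toNat ≤ t.2.2 := by
      intro e
      obtain ⟨t, ht, heq, hle⟩ := hedge e.1 (hESsub e.1 e.2)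
      exact ⟨t, ht, heq, enat_toNat_le hle⟩
    choose tf htfE htfeq htfle using hch
    have hinj : Function.Injective tf := by
      intro x y hxy
      have : x.1.map Subtype.val = y.1.map Subtype.val := by
        rw [← htfeq x, ← htfeq y, hxy]
      exact Subtype.ext (Sym2.map.injective Subtype.val_injective this)
    calc ∑ e ∈ ES, (ewgt P S b (e.map Subtype.val)).toNat / 2
        = ∑ e ∈ ES.attach, (ewgt P S b (e.1.map Subtype.val)).toNat / 2 :=
          (Finset.sum_attach ES _).symm
      _ ≤ ∑ e ∈ ES.attach, (tf e).2.2 / 2 := by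
          apply Finset.sum_le_sum
          intro e _
          exact Nat.div_le_div_right (htfle e)
      _ = ∑ t ∈ ES.attach.image tf, t.2.2 / 2 := by
          rw [Finset.sum_image (fun x _ y _ h => hinj h)]
      _ ≤ ∑ t ∈ E, t.2.2 / 2 := by
          apply Finset.sum_le_sum_of_subset
          intro t ht
          obtain ⟨e, _, rfl⟩ := Finset.mem_image.1 ht
          exact htfE e
      _ ≤ S'.card := by omega
      _ ≤ k := hk

open Classical in
/-- every-other-Steiner-vertex selection along a walk -/
noncomputable def selS (S : Finset Pt) {G : SimpleGraph Pt} :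
    {x y : Pt} → G.Walk x y → Bool → Finset Pt
  | _, _, .nil, _ => ∅
  | x, _, .cons _ w, b =>
    if x ∈ S then (if b then insert x (selS S w false) else selS S w true)
    else selS S w false

lemma selS_sub (S : Finset Pt) {G : SimpleGraph Pt} :
    ∀ {x y : Pt} (w : G.Walk x y) (b : Bool), selS S w b ⊆ S := by
  intro x y w
  induction w with
  | nil => intro b; simp [selS]
  | cons h w' ihw =>
    intro b
    rename_i x' m y'
    by_cases hx : x' ∈ S
    · cases b
      · simpa [selS, hx] using ihw true
      · simp only [selS, hx, if_true]
        intro z hz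
        rcases Finset.mem_insert.1 hz with rfl | hz
        · exact hx
        · exact ihw false hz
    · simpa [selS, hx] using ihw false

lemma selS_card (S : Finset Pt) {G : SimpleGraph Pt} :
    ∀ {x y : Pt} (w : G.Walk x y) (b : Bool),
      2 * (selS S w b).card ≤ cQ S w + (if b then 1 else 0) := by
  intro x y w
  induction w with
  | nil =>
    intro b
    rw [cQ_nil]
    cases b <;> simp [selS] <;> split <;> omega
  | cons h w' ihw =>
    intro b
    rename_i x' m y'
    rw [cQ_cons]
    by_cases hx : x' ∈ S
    · cases b
      · have := ihw true
        simp only [selS, hx, if_true] at this ⊢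
        simp only [Bool.false_eq_true, if_false]
        omega
      · have := ihw false
        have h2 := Finset.card_insert_le x' (selS S w' false)
        simp only [selS, hx, if_true] at this ⊢
        simp only [Bool.false_eq_true, if_false] at this
        omega
    · have := ihw false
      simp only [Bool.false_eq_true, if_false] at this
      cases b <;> simp only [selS, hx, if_false, if_true] <;> omega

lemma selS_conn {P S : Finset Pt} {r : ℝ} (hr : 0 < r) (V' : Finset Pt) (hPV : P ⊆ V') :
    ∀ {x y : Pt} (w : (stGraph P S r).Walk x y) (b : Bool) (a : Pt), a ∈ V' →
      dist a x ≤ (if b then 2 * r else r) → y ∈ P → selS S w b ⊆ V' →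
      Relation.ReflTransGen (fun u v => u ∈ V' ∧ v ∈ V' ∧ dist u v ≤ 2 * r) a y ∧
      ∀ s ∈ selS S w b,
        Relation.ReflTransGen (fun u v => u ∈ V' ∧ v ∈ V' ∧ dist u v ≤ 2 * r) a s := by
  intro x y w
  induction w with
  | nil =>
    intro b a ha hdist hy _
    constructor
    · refine Relation.ReflTransGen.single ⟨ha, hPV hy, ?_⟩
      refine le_trans hdist ?_
      cases b <;> simp <;> nlinarith
    · intro s hs
      simp [selS] at hs
  | cons h w' ihw =>
    intro b a ha hdist hy hsub
    rename_i x' m y'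
    have hdxm : dist x' m ≤ r := h.2.2.2
    by_cases hx : x' ∈ S
    · cases b
      · -- skip x', anchor stays
        have hsub' : selS S w' true ⊆ V' := by
          simpa only [selS, hx, if_true, Bool.false_eq_true, if_false] using hsub
        have hdam : dist a m ≤ 2 * r := by
          have := dist_triangle a x' m
          simp only [Bool.false_eq_true, if_false] at hdist
          linarith
        have hres := ihw true a ha (by simpa using hdam) hy hsub'
        refine ⟨hres.1, ?_⟩
        intro s hs
        simp only [selS, hx, if_true, Bool.false_eq_true, if_false] at hs
        exact hres.2 s hs
      · -- select x', anchor moves to x'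
        have hsub' : insert x' (selS S w' false) ⊆ V' := by
          simpa only [selS, hx, if_true] using hsub
        have hxV : x' ∈ V' := hsub' (Finset.mem_insert_self _ _)
        have hstep : Relation.ReflTransGen
            (fun u v => u ∈ V' ∧ v ∈ V' ∧ dist u v ≤ 2 * r) a x' :=
          Relation.ReflTransGen.single ⟨ha, hxV, by simpa using hdist⟩
        have hih := ihw false x' hxV
          (by simpa only [Bool.false_eq_true, if_false] using hdxm) hy
          (fun z hz => hsub' (Finset.mem_insert_of_mem hz))
        constructor
        · exact hstep.trans hih.1
        · intro s hs
          simp only [selS, hx, if_true] at hs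
          rcases Finset.mem_insert.1 hs with rfl | hs
          · exact hstep
          · exact hstep.trans (hih.2 s hs)
    · -- terminal x', anchor moves to x'
      have hxP : x' ∈ P := by
        rcases Finset.mem_union.1 h.2.1 with h' | h'
        · exact h'
        · exact absurd h' hx
      have hxV : x' ∈ V' := hPV hxP
      have hstep : Relation.ReflTransGen
          (fun u v => u ∈ V' ∧ v ∈ V' ∧ dist u v ≤ 2 * r) a x' := by
        refine Relation.ReflTransGen.single ⟨ha, hxV, le_trans hdist ?_⟩
        cases b <;> simp <;> nlinarith
      have hsub' : selS S w' false ⊆ V' := by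
        simpa only [selS, hx, if_false] using hsub
      have hih := ihw false x' hxV
        (by simpa only [Bool.false_eq_true, if_false] using hdxm) hy hsub'
      constructor
      · exact hstep.trans hih.1
      · intro s hs
        simp only [selS, hx, if_false] at hs
        exact hstep.trans (hih.2 s hs)

lemma steiner_of_goodR (P S : Finset Pt) (hPS : Disjoint P S) (hP : 2 ≤ P.card) (k : ℕ)
    (r : ℝ) (hr : 0 < r) (hg : goodR P S k r) :
    ∃ S' : Finset Pt, S' ⊆ S ∧ S'.card ≤ k ∧
      ∃ T : SimpleGraph ↥(P ∪ S'), T.IsTree ∧ bottleneck T ≤ 2 * r := by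
  classical
  obtain ⟨T', hT'tree, hfin, hsum⟩ := hg
  set ES := T'.edgeSet.toFinite.toFinset with hES
  have hESmem : ∀ e ∈ ES, e ∈ T'.edgeSet := fun e he => (Set.Finite.mem_toFinset _).1 he
  have hch : ∀ e : {x // x ∈ ES}, ∃ (a c : ↥P) (w : (stGraph P S r).Walk ↑a ↑c),
      e.1 = s(a, c) ∧ cQ S w = (ewgt P S r (e.1.map Subtype.val)).toNat := by
    intro e
    obtain ⟨⟨a, c⟩, hrep⟩ := Quot.exists_rep e.1
    have he1 : e.1 = s(a, c) := hrep.symm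
    have hne : wgt P S r ↑a ↑c ≠ ⊤ := by
      have := hfin e.1 (hESmem e.1 e.2)
      rw [he1, Sym2.map_pair_eq, ewgt_mk] at this
      exact this
    obtain ⟨w, hw⟩ := wgt_attain hne
    refine ⟨a, c, w, he1, ?_⟩
    rw [he1, Sym2.map_pair_eq, ewgt_mk]
    exact hw
  choose af cf wf hrep hcnt using hch
  set S' : Finset Pt := ES.attach.biUnion (fun e => selS S (wf e) false) with hS'
  have hS'sub : S' ⊆ S := by
    intro z hz
    obtain ⟨e, _, hze⟩ := Finset.mem_biUnion.1 hz
    exact selS_sub S (wf e) false hze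
  have hS'card : S'.card ≤ k := by
    refine le_trans (Finset.card_biUnion_le) (le_trans ?_ hsum)
    calc ∑ e ∈ ES.attach, (selS S (wf e) false).card
        ≤ ∑ e ∈ ES.attach, (ewgt P S r (e.1.map Subtype.val)).toNat / 2 := by
          apply Finset.sum_le_sum
          intro e _
          have h1 := selS_card S (wf e) false
          rw [hcnt e] at h1
          simp only [Bool.false_eq_true, if_false] at h1
          omega
      _ = ∑ e ∈ ES, (ewgt P S r (e.map Subtype.val)).toNat / 2 :=
          Finset.sum_attach ES (fun e => (ewgt P S r (e.map Subtype.val)).toNat / 2)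
  -- the graph on P ∪ S' with edges of length ≤ 2r
  set H : SimpleGraph ↥(P ∪ S') :=
    { Adj := fun a c => a ≠ c ∧ dist (a : Pt) (c : Pt) ≤ 2 * r
      symm := by
        constructor
        rintro a c ⟨hne, hd⟩
        exact ⟨hne.symm, by rwa [_root_.dist_comm]⟩
      loopless := by constructor; rintro a ⟨hne, -⟩; exact hne rfl } with hH
  have hPV : P ⊆ P ∪ S' := Finset.subset_union_left
  have hstepreach : ∀ (u v : Pt) (hu : u ∈ P ∪ S'),
      Relation.ReflTransGen (fun u v => u ∈ P ∪ S' ∧ v ∈ P ∪ S' ∧ dist u v ≤ 2 * r) u v →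
      ∀ hv : v ∈ P ∪ S', H.Reachable ⟨u, hu⟩ ⟨v, hv⟩ := by
    intro u v hu hrtg
    induction hrtg with
    | refl => intro hv; exact Reachable.refl _
    | tail h1 h2 ih =>
      rename_i b' c'
      intro hv
      obtain ⟨hb, hc, hd⟩ := h2
      by_cases hbc : b' = c'
      · subst hbc; exact ih hv
      · exact (ih hb).trans (Adj.reachable ⟨fun hcon => hbc (congrArg Subtype.val hcon), hd⟩)
  have hedgeconn : ∀ e : {x // x ∈ ES},
      Relation.ReflTransGen (fun u v => u ∈ P ∪ S' ∧ v ∈ P ∪ S' ∧ dist u v ≤ 2 * r)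
        ↑(af e) ↑(cf e) ∧
      ∀ s ∈ selS S (wf e) false,
        Relation.ReflTransGen (fun u v => u ∈ P ∪ S' ∧ v ∈ P ∪ S' ∧ dist u v ≤ 2 * r)
          ↑(af e) s := by
    intro e
    refine selS_conn hr (P ∪ S') hPV (wf e) false ↑(af e) (hPV (af e).2) ?_ (cf e).2 ?_
    · simp [_root_.dist_self, hr.le]
    · exact le_trans (Finset.subset_biUnion_of_mem (fun e => selS S (wf e) false) (Finset.mem_attach _ e))
        Finset.subset_union_right
  have htermconn : ∀ a c : ↥P,
      Relation.ReflTransGen (fun u v => u ∈ P ∪ S' ∧ v ∈ P ∪ S' ∧ dist u v ≤ 2 * r) ↑a ↑c := by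
    have hsymrel : Symmetric (fun u v => u ∈ P ∪ S' ∧ v ∈ P ∪ S' ∧ dist u v ≤ 2 * r) := by
      rintro u v ⟨h1, h2, h3⟩
      exact ⟨h2, h1, by rwa [_root_.dist_comm]⟩
    intro a c
    obtain ⟨w⟩ := hT'tree.isConnected.preconnected a c
    induction w with
    | nil => exact Relation.ReflTransGen.refl
    | cons hadj w' ihw =>
      rename_i a' m' c'
      refine Relation.ReflTransGen.trans ?_ ihw
      have hmem : s(a', m') ∈ ES := (Set.Finite.mem_toFinset _).2 hadj
      set ee : {x // x ∈ ES} := ⟨s(a', m'), hmem⟩ with heedef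
      have := hrep ee
      rw [Sym2.eq_iff] at this
      rcases this with ⟨h1, h2⟩ | ⟨h1, h2⟩
      · have := (hedgeconn ee).1
        rw [← h1, ← h2] at this
        exact this
      · have := (hedgeconn ee).1
        rw [← h1, ← h2] at this
        exact (@Relation.ReflTransGen.stdSymm _ _ ⟨fun _ _ h => hsymrel h⟩).symm _ _ this
  have hNE : Nonempty ↥(P ∪ S') := by
    obtain ⟨p1, hp1⟩ : P.Nonempty := Finset.card_pos.1 (by omega)
    exact ⟨⟨p1, hPV hp1⟩⟩
  have hHconn : H.Connected := by
    constructor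
    intro u v
    -- every vertex reaches a terminal
    have key : ∀ u : ↥(P ∪ S'), ∃ (p : ↥P), H.Reachable u ⟨↑p, hPV p.2⟩ := by
      intro u
      rcases Finset.mem_union.1 u.2 with hu | hu
      · exact ⟨⟨↑u, hu⟩, by
          have : u = ⟨↑u, hPV hu⟩ := Subtype.ext rfl
          exact this ▸ Reachable.refl _⟩
      · obtain ⟨e, _, hse⟩ := Finset.mem_biUnion.1 hu
        have h2 := (hedgeconn e).2 ↑u hse
        have := hstepreach ↑(af e) ↑u (hPV (af e).2) h2 u.2
        exact ⟨af e, (this.symm.trans (Reachable.refl _))⟩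
    obtain ⟨pu, hpu⟩ := key u
    obtain ⟨pv, hpv⟩ := key v
    have hterm := htermconn pu pv
    have := hstepreach ↑pu ↑pv (hPV pu.2) hterm (hPV pv.2)
    exact (hpu.trans this).trans hpv.symm
  obtain ⟨T₂, hT₂le, hT₂tree⟩ := exists_spanning_tree H hHconn
  refine ⟨S', hS'sub, hS'card, T₂, hT₂tree, ?_⟩
  apply Real.sSup_le
  · rintro d ⟨x, y, hxy, rfl⟩
    exact (hT₂le hxy).2
  · nlinarith

lemma tree_exists_adj {V : Finset Pt} (hV : 2 ≤ V.card) {T : SimpleGraph ↥V}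
    (hT : T.IsTree) : ∃ x y : ↥V, T.Adj x y := by
  obtain ⟨a, ha, b, hb, hab⟩ := Finset.one_lt_card.1 hV
  have hreach := hT.isConnected.preconnected ⟨a, ha⟩ ⟨b, hb⟩
  refine hreach.elim fun w => ?_
  cases w with
  | nil => exact absurd rfl hab
  | cons hadj w' => exact ⟨_, _, hadj⟩

lemma bottleneck_mem {V : Finset Pt} (hV : 2 ≤ V.card) {T : SimpleGraph ↥V}
    (hT : T.IsTree) : ∃ x y : ↥V, T.Adj x y ∧ bottleneck T = dist (x : Pt) (y : Pt) := by
  obtain ⟨x, y, hxy⟩ := tree_exists_adj hV hT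
  have hne : {d : ℝ | ∃ x y : ↥V, T.Adj x y ∧ d = dist (x : Pt) (y : Pt)}.Nonempty :=
    ⟨_, x, y, hxy, rfl⟩
  have := hne.csSup_mem (edgeDists_finite T)
  exact this

theorem stmt8 (P S : Finset Pt) (hPS : Disjoint P S) (hP : 2 ≤ P.card) (k : ℕ)
    (hex : ∃ S' : Finset Pt, S' ⊆ S ∧ S'.card ≤ k ∧
      ∃ T : SimpleGraph ↥(P ∪ S'), T.IsTree) :
    (∀ S' : Finset Pt, S' ⊆ S → S'.card ≤ k →
        ∀ T : SimpleGraph ↥(P ∪ S'), T.IsTree →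
          sInf {r : ℝ | 0 < r ∧ goodR P S k r} ≤ bottleneck T) ∧
    (∃ S' : Finset Pt, S' ⊆ S ∧ S'.card ≤ k ∧
      ∃ T : SimpleGraph ↥(P ∪ S'), T.IsTree ∧
        bottleneck T ≤ 2 * sInf {r : ℝ | 0 < r ∧ goodR P S k r}) ∧
    (∃ S' : Finset Pt, S' ⊆ S ∧ S'.card ≤ k ∧
      ∃ T : SimpleGraph ↥(P ∪ S'), T.IsTree ∧
        ∀ S'' : Finset Pt, S'' ⊆ S → S''.card ≤ k →
          ∀ T'' : SimpleGraph ↥(P ∪ S''), T''.IsTree →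
            bottleneck T ≤ 2 * bottleneck T'') := by
  classical
  set A := {r : ℝ | 0 < r ∧ goodR P S k r} with hA
  have hcard2 : ∀ S' : Finset Pt, 2 ≤ (P ∪ S').card :=
    fun S' => le_trans hP (Finset.card_le_card Finset.subset_union_left)
  have hmemA : ∀ S' : Finset Pt, S' ⊆ S → S'.card ≤ k →
      ∀ T : SimpleGraph ↥(P ∪ S'), T.IsTree → bottleneck T ∈ A := by
    intro S' hS' hk T hT
    exact ⟨bottleneck_pos (hcard2 S') hT, goodR_of_tree P S hPS hP k S' hS' hk T hT⟩
  have hAne : A.Nonempty := by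
    obtain ⟨S', hS', hk, T, hT⟩ := hex
    exact ⟨_, hmemA S' hS' hk T hT⟩
  have hAbdd : BddBelow A := ⟨0, fun x hx => hx.1.le⟩
  have part1 : ∀ S' : Finset Pt, S' ⊆ S → S'.card ≤ k →
      ∀ T : SimpleGraph ↥(P ∪ S'), T.IsTree → sInf A ≤ bottleneck T :=
    fun S' hS' hk T hT => csInf_le hAbdd (hmemA S' hS' hk T hT)
  -- the set of achievable bottlenecks
  set B := {b : ℝ | ∃ S' : Finset Pt, S' ⊆ S ∧ S'.card ≤ k ∧
    ∃ T : SimpleGraph ↥(P ∪ S'), T.IsTree ∧ bottleneck T = b} with hB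
  have hBfin : B.Finite := by
    apply Set.Finite.subset (Set.Finite.image (fun q : Pt × Pt => dist q.1 q.2)
      (((P ∪ S) ×ˢ (P ∪ S) : Finset (Pt × Pt)).finite_toSet))
    rintro b ⟨S', hS', hk, T, hT, rfl⟩
    obtain ⟨x, y, hxy, heq⟩ := bottleneck_mem (hcard2 S') hT
    refine ⟨(↑x, ↑y), ?_, heq.symm⟩
    simp only [Finset.coe_product, Set.mem_prod, Finset.mem_coe]
    constructor
    · exact Finset.union_subset_union_right hS' x.2
    · exact Finset.union_subset_union_right hS' y.2
  have hBne : B.Nonempty := by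
    obtain ⟨S', hS', hk, T, hT⟩ := hex
    exact ⟨bottleneck T, S', hS', hk, T, hT, rfl⟩
  -- minimal element of B
  have hFne : hBfin.toFinset.Nonempty := by
    rwa [Set.Finite.toFinset_nonempty]
  set β := hBfin.toFinset.min' hFne with hβ
  have hβB : β ∈ B := by
    have := hBfin.toFinset.min'_mem hFne
    rwa [Set.Finite.mem_toFinset] at this
  have hβmin : ∀ b ∈ B, β ≤ b := by
    intro b hb
    exact hBfin.toFinset.min'_le b ((Set.Finite.mem_toFinset _).2 hb)
  obtain ⟨Sβ, hSβ, hkβ, Tβ, hTβ, hTβb⟩ := hβB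
  have hβpos : 0 < β := hTβb ▸ bottleneck_pos (hcard2 Sβ) hTβ
  have hf4 : ∀ r ∈ A, β ≤ 2 * r := by
    rintro r ⟨hr, hg⟩
    obtain ⟨S', hS', hk, T, hT, hbd⟩ := steiner_of_goodR P S hPS hP k r hr hg
    exact le_trans (hβmin _ ⟨S', hS', hk, T, hT, rfl⟩) hbd
  have hinfge : β / 2 ≤ sInf A := by
    refine le_csInf hAne ?_
    intro r hr
    have := hf4 r hr
    linarith
  refine ⟨part1, ⟨Sβ, hSβ, hkβ, Tβ, hTβ, by rw [hTβb]; linarith⟩,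
    ⟨Sβ, hSβ, hkβ, Tβ, hTβ, ?_⟩⟩
  intro S'' hS'' hk'' T'' hT''
  have h1 : β ≤ bottleneck T'' := hβmin _ ⟨S'', hS'', hk'', T'', hT'', rfl⟩
  have h2 : 0 < bottleneck T'' := bottleneck_pos (hcard2 S'') hT''
  rw [hTβb]
  linarith
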